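/- Every strict constant game is static: if A is a constant game such that for every legal position Φ of A, at most one of the players has a legal move in Φ (i.e., {α : ⟨Φ, ⊤α⟩ legal} = ∅ or {α : ⟨Φ, ⊥α⟩ legal} = ∅), then for any player p and runs Γ, Δ with Δ a p-delay of Γ, Wn_A(Γ) = p implies Wn_A(Δ) = p. -/

import Mathlib

/-- A run: a finite sequence of labmoves; a labmove is a pair (player, move),
player `true` = ⊤ (machine), `false` = ⊥ (environment). -/
abbrev Run (M : Type*) := List (Bool × M)

/-- Indices (0-based positions) of the `q`-labeled moves of a run. -/
def labelIndices {M : Type*} (Γ : Run M) (q : Bool) : List ℕ :=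
  (Γ.zipIdx.map Prod.swap).filterMap fun x => if x.2.1 = q then some x.1 else none

/-- In `Γ`, the `k`-th `(¬p)`-labeled move occurs strictly earlier (to the
left) than the `n`-th `p`-labeled move (`k`, `n` are 0-based here). -/
def kthPrecedes {M : Type*} (Γ : Run M) (p : Bool) (k n : ℕ) : Prop :=
  ∃ i j, (labelIndices Γ (!p))[k]? = some i ∧ (labelIndices Γ p)[n]? = some j ∧ i < j

/-- `IsDelay p Γ Δ` says that `Δ` is a `p`-delay of `Γ`: (1) same subsequence
of `p`-labeled moves and same subsequence of `(¬p)`-labeled moves; (2) whenever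
the `k`-th `(¬p)`-labeled move precedes the `n`-th `p`-labeled move in `Γ`, the
same holds in `Δ`. -/
def IsDelay {M : Type*} (p : Bool) (Γ Δ : Run M) : Prop :=
  Δ.filter (fun x => x.1 == p) = Γ.filter (fun x => x.1 == p) ∧
  Δ.filter (fun x => x.1 == !p) = Γ.filter (fun x => x.1 == !p) ∧
  ∀ k n, kthPrecedes Γ p k n → kthPrecedes Δ p k n

/-- A constant game: a pair (Lr, Wn) of a set of (legal) runs and a function
assigning to each run a winner (`true` = ⊤, `false` = ⊥). -/
structure ConstGame (M : Type*) where
  Lr : Set (Run M)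
  Wn : Run M → Bool

/-- A constant game is static iff for every player `p` and all runs Γ, Δ such
that Δ is a `p`-delay of Γ: if Γ is won by `p`, then so is Δ. -/
def ConstGame.Static {M : Type*} (A : ConstGame M) : Prop :=
  ∀ (p : Bool) (Γ Δ : Run M), IsDelay p Γ Δ → A.Wn Γ = p → A.Wn Δ = p

/-- `Γ` is a `p`-illegal run of `A`: the last move of the shortest illegal
initial segment of `Γ` is `p`-labeled. -/
def PIllegal {M : Type*} (A : ConstGame M) (p : Bool) (Γ : Run M) : Prop :=
  ∃ (Φ : Run M) (m : M),
    Φ ++ [(p, m)] <+: Γ ∧ Φ ∈ A.Lr ∧ Φ ++ [(p, m)] ∉ A.Lr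

section Aux
variable {M : Type*}

lemma enumFrom_shift (l : List M) (n : ℕ) :
    (List.zipIdx l (n+1)).map Prod.swap =
      ((List.zipIdx l n).map Prod.swap).map (fun x => (x.1+1, x.2)) := by
  induction l generalizing n with
  | nil => rfl
  | cons a l ih =>
    simp only [List.zipIdx_cons, List.map_cons, ih (n+1)]
    rfl

lemma labelIndices_cons (x : Bool × M) (Γ : Run M) (q : Bool) :
    labelIndices (x :: Γ) q =
      (if x.1 = q then [0] else []) ++ (labelIndices Γ q).map (· + 1) := by
  have h1 : (List.zipIdx Γ (0+1)).map Prod.swap =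
      (Γ.zipIdx.map Prod.swap).map (fun y => (y.1 + 1, y.2)) := enumFrom_shift Γ 0
  unfold labelIndices
  rw [List.zipIdx_cons, List.map_cons, List.filterMap_cons, h1, List.filterMap_map]
  have h2 : (fun (y : ℕ × (Bool × M)) => if y.2.1 = q then some y.1 else none) ∘
      (fun (y : ℕ × (Bool × M)) => (y.1 + 1, y.2))
      = fun y => Option.map (· + 1) (if y.2.1 = q then some y.1 else none) := by
    funext y; by_cases h : y.2.1 = q <;> simp [h]
  rw [h2, ← List.map_filterMap]
  by_cases h : x.1 = q <;> simp [h]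

lemma labelIndices_append (Φ Ψ : Run M) (q : Bool) :
    labelIndices (Φ ++ Ψ) q = labelIndices Φ q ++ (labelIndices Ψ q).map (· + Φ.length) := by
  induction Φ with
  | nil => simp [labelIndices]
  | cons x Φ ih =>
    rw [List.cons_append, labelIndices_cons, labelIndices_cons, ih]
    by_cases h : x.1 = q <;>
      simp [h, List.map_map, Function.comp_def, Nat.add_assoc, Nat.add_comm 1]

lemma length_labelIndices (Γ : Run M) (q : Bool) :
    (labelIndices Γ q).length = (Γ.filter (fun x => x.1 == q)).length := by
  induction Γ with
  | nil => simp [labelIndices]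
  | cons x Γ ih =>
    rw [labelIndices_cons, List.filter_cons]
    by_cases h : x.1 = q <;> simp [h, ih]

lemma labelIndices_next_same (Φ rest : Run M) (q : Bool) (m : M) :
    (labelIndices (Φ ++ (q, m) :: rest) q)[(Φ.filter (fun x => x.1 == q)).length]? =
      some Φ.length := by
  rw [labelIndices_append,
    List.getElem?_append_right (by rw [length_labelIndices]), labelIndices_cons]
  simp [length_labelIndices]

lemma labelIndices_next_other (Φ rest : Run M) (q q' : Bool) (m' : M) (hq : q' ≠ q)
    {k i : ℕ} (hk : (Φ.filter (fun x => x.1 == q)).length ≤ k)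
    (h : (labelIndices (Φ ++ (q', m') :: rest) q)[k]? = some i) : Φ.length < i := by
  rw [labelIndices_append,
    List.getElem?_append_right (by rw [length_labelIndices]; exact hk),
    labelIndices_cons] at h
  simp only [if_neg hq, List.nil_append, List.map_map, List.getElem?_map,
    Option.map_eq_some_iff] at h
  obtain ⟨y, -, rfl⟩ := h
  simp only [Function.comp]
  omega

lemma length_filter_partition (l : Run M) (p : Bool) :
    l.length = (l.filter (fun x => x.1 == p)).length +
      (l.filter (fun x => x.1 == !p)).length := by
  induction l with
  | nil => rfl
  | cons x l ih =>
    rw [List.filter_cons, List.filter_cons]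
    cases hx : x.1 <;> cases p <;> simp_all <;> omega

lemma prefix_snoc_of_getElem {Φ Γ : Run M} {x : Bool × M}
    (h1 : Φ <+: Γ) (h2 : Γ[Φ.length]? = some x) : Φ ++ [x] <+: Γ := by
  obtain ⟨t, rfl⟩ := h1
  rw [List.getElem?_append_right le_rfl, Nat.sub_self] at h2
  cases t with
  | nil => simp at h2
  | cons y t => simp at h2; exact ⟨t, by simp [h2]⟩

end Aux

section Game
variable {M : Type*}

lemma IsDelay.filter_eq {p : Bool} {Γ Δ : Run M} (hd : IsDelay p Γ Δ) (q : Bool) :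
    Δ.filter (fun x => x.1 == q) = Γ.filter (fun x => x.1 == q) := by
  obtain ⟨h1, h2, -⟩ := hd
  cases p <;> cases q <;> simp_all

/-- If `Φ ++ [(q,m)]` is a prefix of `Δ` then `Γ` (same `q`-moves) can't be just `Φ`. -/
lemma not_end {p q : Bool} {Γ Δ Φ : Run M} {m : M} (hd : IsDelay p Γ Δ)
    (hpre : Φ ++ [(q, m)] <+: Δ) (hΓ : Γ = Φ) : False := by
  have h1 := (List.IsPrefix.filter (fun x => x.1 == q) hpre).length_le
  rw [hd.filter_eq q, hΓ] at h1
  simp at h1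

/-- If the next move in both `Δ` and `Γ` after `Φ` has the same label, it's the same move. -/
lemma same_next {p q : Bool} {Γ Δ Φ : Run M} {m m' : M} (hd : IsDelay p Γ Δ)
    (hpre : Φ ++ [(q, m)] <+: Δ) (h2 : Φ <+: Γ) (h3 : Γ[Φ.length]? = some (q, m')) :
    m' = m := by
  have hΓ : Φ ++ [(q, m')] <+: Γ := prefix_snoc_of_getElem h2 h3
  have hd1 := (List.IsPrefix.filter (fun x => x.1 == q) hpre)
  have hd2 := (List.IsPrefix.filter (fun x => x.1 == q) hΓ)
  rw [hd.filter_eq q] at hd1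
  simp only [List.filter_append] at hd1 hd2
  have hone : ∀ m'' : M, List.filter (fun x => x.1 == q) [(q, m'')] = [(q, m'')] := by
    intro m''; simp
  rw [hone] at hd1 hd2
  have h4 := List.prefix_of_prefix_length_le hd1 hd2 (by simp)
  have h5 := h4.eq_of_length (by simp)
  have h6 := List.append_cancel_left h5
  simpa using h6.symm

/-- The crux: the next move after `Φ` cannot be `p`-labeled in `Δ` but `(¬p)`-labeled in `Γ`. -/
lemma no_cross {p : Bool} {Γ Δ Φ : Run M} {m m' : M} (hd : IsDelay p Γ Δ)
    (hpreΔ : Φ ++ [(p, m)] <+: Δ) (hpreΓ : Φ ++ [(!p, m')] <+: Γ) : False := by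
  have hpreΓ' := hpreΓ
  have hpreΔ' := hpreΔ
  obtain ⟨tΓ, hΓ⟩ := hpreΓ
  obtain ⟨tΔ, hΔ⟩ := hpreΔ
  rw [List.append_assoc, List.singleton_append] at hΓ hΔ
  set k := (Φ.filter (fun x => x.1 == !p)).length with hk
  set n := (Φ.filter (fun x => x.1 == p)).length with hn
  -- the k-th (¬p)-move of Γ is at position Φ.length
  have hkΓ : (labelIndices Γ (!p))[k]? = some Φ.length := by
    rw [← hΓ]; exact labelIndices_next_same Φ tΓ (!p) m'
  -- the n-th p-move of Γ exists
  have hlen : n < (labelIndices Γ p).length := by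
    rw [length_labelIndices, ← hd.filter_eq p]
    have hle := (List.IsPrefix.filter (fun x => x.1 == p) hpreΔ').length_le
    simp only [List.filter_append] at hle
    simp at hle
    omega
  obtain ⟨j, hj⟩ : ∃ j, (labelIndices Γ p)[n]? = some j :=
    ⟨(labelIndices Γ p)[n], List.getElem?_eq_getElem hlen⟩
  -- and it is after position Φ.length
  have hjgt : Φ.length < j := by
    refine labelIndices_next_other Φ tΓ p (!p) m' (by simp) le_rfl ?_
    rw [hΓ]; exact hj
  have hprec : kthPrecedes Γ p k n := ⟨Φ.length, j, hkΓ, hj, hjgt⟩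
  obtain ⟨i, j', hi, hj', hij⟩ := hd.2.2 k n hprec
  -- but in Δ the n-th p-move is at position Φ.length
  have hj'eq : j' = Φ.length := by
    have : (labelIndices Δ p)[n]? = some Φ.length := by
      rw [← hΔ]; exact labelIndices_next_same Φ tΔ p m
    rw [this] at hj'; exact (Option.some_inj.mp hj').symm
  -- and the k-th (¬p)-move of Δ is after position Φ.length
  have higt : Φ.length < i := by
    refine labelIndices_next_other Φ tΔ (!p) p m (by simp) le_rfl ?_
    rw [hΔ]; exact hi
  omega

end Game

section Main
variable {M : Type*}

lemma nil_legal (A : ConstGame M)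
    (hcl : ∀ Γ : Run M, Γ ∈ A.Lr ↔ ∀ Φ : Run M, Φ ≠ [] → Φ <+: Γ → Φ ∈ A.Lr) :
    ([] : Run M) ∈ A.Lr :=
  (hcl []).mpr (fun Φ hne hpre => absurd (List.prefix_nil.mp hpre) hne)

/-- Every legal prefix of `Δ` is a prefix of `Γ`. -/
lemma key_prefix (A : ConstGame M)
    (hcl : ∀ Γ : Run M, Γ ∈ A.Lr ↔ ∀ Φ : Run M, Φ ≠ [] → Φ <+: Γ → Φ ∈ A.Lr)
    (hstrict : ∀ Φ ∈ A.Lr,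
      (∀ m : M, Φ ++ [(true, m)] ∉ A.Lr) ∨ (∀ m : M, Φ ++ [(false, m)] ∉ A.Lr))
    (p : Bool) (Γ Δ : Run M) (hd : IsDelay p Γ Δ) (hΓ : ¬ PIllegal A p Γ) :
    ∀ Ψ : Run M, Ψ <+: Δ → Ψ ∈ A.Lr → Ψ <+: Γ := by
  intro Ψ
  induction Ψ using List.reverseRecOn with
  | nil => intro _ _; exact List.nil_prefix
  | append_singleton Ψ' x ih =>
    intro hpre hleg
    obtain ⟨q, m⟩ := x
    have hΨ'Δ : Ψ' <+: Δ := (List.prefix_append _ _).trans hpre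
    have hΨ'leg : Ψ' ∈ A.Lr := by
      rcases eq_or_ne Ψ' [] with rfl | hne
      · exact nil_legal A hcl
      · exact (hcl _).mp hleg Ψ' hne (List.prefix_append _ _)
    have hΨ'Γ : Ψ' <+: Γ := ih hΨ'Δ hΨ'leg
    obtain ⟨t, ht⟩ := hΨ'Γ
    cases t with
    | nil => exact absurd (not_end hd hpre (by simpa using ht.symm)) not_false
    | cons y t' =>
      obtain ⟨q', m'⟩ := y
      have hget : Γ[Ψ'.length]? = some (q', m') := by
        rw [← ht, List.getElem?_append_right le_rfl, Nat.sub_self]; simp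
      have hpreΓ' : Ψ' ++ [(q', m')] <+: Γ := by
        refine ⟨t', ?_⟩
        rw [List.append_assoc, List.singleton_append]; exact ht
      by_cases hq : q = q'
      · have hm : m' = m := same_next hd (hq ▸ hpre) ⟨(q', m') :: t', ht⟩ hget
        rw [hq, ← hm]
        exact hpreΓ'
      · have hq'' : q' = !q := Bool.eq_not_of_ne (Ne.symm hq)
        by_cases hqp : q = p
        · -- next Δ-move is p-labeled, next Γ-move is (¬p)-labeled: impossible
          have hq3 : q' = !p := by rw [hq'', hqp]
          rw [hqp] at hpre
          rw [hq3] at hpreΓ'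
          exact absurd (no_cross hd hpre hpreΓ') not_false
        · -- q = !p, q' = p : Γ is p-illegal via strictness
          have hq4 : q = !p := Bool.eq_not_of_ne hqp
          have hq5 : q' = p := by rw [hq'', hq4, Bool.not_not]
          have hnot : Ψ' ++ [(q', m')] ∉ A.Lr := by
            rcases hstrict Ψ' hΨ'leg with h | h
            · cases hp : p with
              | true => rw [hq5, hp]; exact h m'
              | false =>
                have hqt : q = true := by simp [hq4, hp]
                rw [hqt] at hleg
                exact absurd hleg (h m)
            · cases hp : p with
              | false => rw [hq5, hp]; exact h m'
              | true =>
                have hqt : q = false := by simp [hq4, hp]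
                rw [hqt] at hleg
                exact absurd hleg (h m)
          rw [hq5] at hpreΓ' hnot
          exact absurd ⟨Ψ', m', hpreΓ', hΨ'leg, hnot⟩ hΓ

lemma exists_illegal_step (A : ConstGame M)
    (hcl : ∀ Γ : Run M, Γ ∈ A.Lr ↔ ∀ Φ : Run M, Φ ≠ [] → Φ <+: Γ → Φ ∈ A.Lr) :
    ∀ (n : ℕ) (Δ : Run M), Δ.length ≤ n → Δ ∉ A.Lr →
    ∃ (Φ : Run M) (q : Bool) (m : M),
      Φ ++ [(q, m)] <+: Δ ∧ Φ ∈ A.Lr ∧ Φ ++ [(q, m)] ∉ A.Lr := by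
  intro n
  induction n with
  | zero =>
    intro Δ hlen hΔ
    rw [List.length_eq_zero_iff.mp (Nat.le_zero.mp hlen)] at hΔ
    exact absurd (nil_legal A hcl) hΔ
  | succ n ih =>
    intro Δ hlen hΔ
    rw [hcl] at hΔ
    push_neg at hΔ
    obtain ⟨Φ, hne, hpre, hnleg⟩ := hΔ
    rcases List.eq_nil_or_concat Φ with rfl | ⟨Φ', x, rfl⟩
    · exact absurd rfl hne
    · rw [List.concat_eq_append] at hpre hnleg
      by_cases hΦ' : Φ' ∈ A.Lr
      · exact ⟨Φ', x.1, x.2, by simpa using hpre, hΦ', by simpa using hnleg⟩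
      · have hlen' : Φ'.length ≤ n := by
          have := hpre.length_le
          simp at this
          omega
        obtain ⟨Ψ, q, m, h1, h2, h3⟩ := ih Φ' hlen' hΦ'
        exact ⟨Ψ, q, m, h1.trans ((List.prefix_append _ _).trans hpre), h2, h3⟩

end Main

/-- Every strict constant game is static.  Hypotheses: A is a constant game
(a run is legal iff all its nonempty initial segments are legal, and a
`p`-illegal run is not won by `p`), and A is strict (in every legal position at
most one of the players has legal moves). -/
theorem strict_static {M : Type*} (A : ConstGame M)
    (hcl : ∀ Γ : Run M, Γ ∈ A.Lr ↔ ∀ Φ : Run M, Φ ≠ [] → Φ <+: Γ → Φ ∈ A.Lr)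
    (hil : ∀ (p : Bool) (Γ : Run M), PIllegal A p Γ → A.Wn Γ ≠ p)
    (hstrict : ∀ Φ ∈ A.Lr,
      (∀ m : M, Φ ++ [(true, m)] ∉ A.Lr) ∨ (∀ m : M, Φ ++ [(false, m)] ∉ A.Lr)) :
    A.Static := by
  intro p Γ Δ hd hW
  have hΓ : ¬ PIllegal A p Γ := fun h => hil p Γ h hW
  by_cases hΔ : Δ ∈ A.Lr
  · have hpre : Δ <+: Γ := key_prefix A hcl hstrict p Γ Δ hd hΓ Δ List.prefix_rfl hΔ
    have hlen : Δ.length = Γ.length := by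
      rw [length_filter_partition Δ p, length_filter_partition Γ p,
        hd.filter_eq p, hd.filter_eq (!p)]
    rw [hpre.eq_of_length hlen]
    exact hW
  · obtain ⟨Φ, q, m, h1, h2, h3⟩ := exists_illegal_step A hcl Δ.length Δ le_rfl hΔ
    by_cases hqp : q = p
    · subst hqp
      exfalso
      have hΦΓ : Φ <+: Γ :=
        key_prefix A hcl hstrict q Γ Δ hd hΓ Φ ((List.prefix_append _ _).trans h1) h2
      obtain ⟨t, ht⟩ := hΦΓ
      cases t with
      | nil => exact not_end hd h1 (by simpa using ht.symm)
      | cons y t' =>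
        obtain ⟨q', m'⟩ := y
        have hget : Γ[Φ.length]? = some (q', m') := by
          rw [← ht, List.getElem?_append_right le_rfl, Nat.sub_self]; simp
        by_cases hq : q' = q
        · subst hq
          have hm : m' = m := same_next hd h1 ⟨(q', m') :: t', ht⟩ hget
          rw [hm] at ht
          apply hΓ
          refine ⟨Φ, m, ⟨t', ?_⟩, h2, h3⟩
          rw [List.append_assoc, List.singleton_append]
          exact ht
        · have hq'' : q' = !q := Bool.eq_not_of_ne hq
          have hpreΓ' : Φ ++ [(!q, m')] <+: Γ :=
            ⟨t', by rw [List.append_assoc, List.singleton_append, ← hq'']; exact ht⟩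
          exact no_cross hd h1 hpreΓ'
    · have hq4 : q = !p := Bool.eq_not_of_ne hqp
      rw [hq4] at h1 h3
      have hne := hil (!p) Δ ⟨Φ, m, h1, h2, h3⟩
      exact (by decide : ∀ a b : Bool, a ≠ !b → a = b) _ _ hne
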